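/- (Lemma 1, q-analog of the Cassini–Euler identity) For every n ∈ ℤ and all natural numbers m, ℓ, the 2×2 determinant det [[f(n, x, s), f(n−ℓ, x, q^ℓ·s)], [f(n+m, x, s), f(n+m−ℓ, x, q^ℓ·s)]] equals (−s)^{n−ℓ} · q^{binom(n,2) − binom(ℓ,2)} · f(ℓ, x, s) · f(m, x, q^n·s), where (−s)^{n−ℓ} and q^{binom(n,2)} are interpreted as integer powers of nonzero field elements (binom(n,2) = n(n−1)/2 for n ∈ ℤ). -/

import Mathlib

open Finset

variable {K : Type*} [Field K]

noncomputable def qFibPos (q x t : K) : ℕ → K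
  | 0 => 0
  | 1 => 1
  | n + 2 => x * qFibPos q x t (n + 1) + q ^ n * t * qFibPos q x t n

noncomputable def qFibNeg (q x t : K) : ℕ → K
  | 0 => 0
  | 1 => q / t
  | m + 2 => (qFibNeg q x t m - x * qFibNeg q x t (m + 1)) * q ^ (m + 2) / t

/-- The Carlitz q-Fibonacci polynomial `f(n, x, t)` for `n : ℤ`, defined by `f 0 = 0`,
`f 1 = 1` and `f n = x * f (n-1) + q^(n-2) * t * f (n-2)`, solved backwards for `n < 0`. -/
noncomputable def qFib (q x t : K) : ℤ → K
  | Int.ofNat n => qFibPos q x t n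
  | Int.negSucc m => qFibNeg q x t (m + 1)

lemma qFib_zero' (q x t : K) : qFib q x t 0 = 0 := rfl
lemma qFib_one' (q x t : K) : qFib q x t 1 = 1 := rfl

lemma qFib_rec (q x t : K) (hq : q ≠ 0) (ht : t ≠ 0) (n : ℤ) :
    qFib q x t (n + 2) = x * qFib q x t (n + 1) + q ^ n * t * qFib q x t n := by
  obtain ⟨k, rfl | rfl⟩ := Int.eq_nat_or_neg n
  · rw [show (k:ℤ)+2 = ((k+2:ℕ):ℤ) by push_cast; ring,
        show (k:ℤ)+1 = ((k+1:ℕ):ℤ) by push_cast; ring]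
    have hn : ∀ j:ℕ, qFib q x t (j:ℤ) = qFibPos q x t j := fun j => rfl
    rw [hn, hn, hn, zpow_natCast, qFibPos]
  · match k with
    | 0 => simp [qFib, qFibPos, qFibNeg]
    | 1 =>
      show qFib q x t 1 = x * qFib q x t 0 + q ^ (-1 : ℤ) * t * qFib q x t (-1)
      show (1 : K) = x * 0 + q ^ (-1:ℤ) * t * qFibNeg q x t 1
      rw [qFibNeg]
      field_simp
      ring
    | 2 =>
      show qFib q x t 0 = x * qFib q x t (-1) + q ^ (-2 : ℤ) * t * qFib q x t (-2)
      show (0 : K) = x * qFibNeg q x t 1 + q ^ (-2:ℤ) * t * qFibNeg q x t 2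
      rw [qFibNeg, qFibNeg, qFibNeg, qFibNeg]
      have h2 : q ^ (-2:ℤ) = (q^2)⁻¹ := by
        rw [show (-2:ℤ) = -((2:ℕ):ℤ) by norm_num, zpow_neg, zpow_natCast]
      rw [h2]
      field_simp
      ring
    | (j+3) =>
      have h1 : -((j+3 : ℕ) : ℤ) + 2 = Int.negSucc j := by rw [Int.negSucc_eq]; push_cast; ring
      have h2 : -((j+3 : ℕ) : ℤ) + 1 = Int.negSucc (j+1) := by rw [Int.negSucc_eq]; push_cast; ring
      have h3 : -((j+3 : ℕ) : ℤ) = Int.negSucc (j+2) := by rw [Int.negSucc_eq]; push_cast; ring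
      rw [h1, h2, h3]
      show qFibNeg q x t (j+1) = x * qFibNeg q x t (j+2) + q ^ (-((j+3:ℕ):ℤ)) * t * qFibNeg q x t (j+3)
      rw [show qFibNeg q x t (j+3) = (qFibNeg q x t (j+1) - x * qFibNeg q x t (j+2)) * q ^ (j+3) / t from rfl]
      rw [zpow_neg, zpow_natCast]
      field_simp
      ring

lemma tri_step (n : ℤ) : (n+1)*n/2 = n*(n-1)/2 + n := by
  obtain ⟨k, hk⟩ := Int.even_mul_pred_self n
  have h2 : (n+1)*n = n*(n-1) + 2*n := by ring
  omega

lemma qFib_D_step (q x s : K) (hq : q ≠ 0) (hs : s ≠ 0) (ℓ : ℕ) (n : ℤ) :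
    qFib q x s (n+1) * qFib q x (q^ℓ*s) (n+2-ℓ) - qFib q x s (n+2) * qFib q x (q^ℓ*s) (n+1-ℓ)
    = -q^n * s * (qFib q x s n * qFib q x (q^ℓ*s) (n+1-ℓ)
        - qFib q x s (n+1) * qFib q x (q^ℓ*s) (n-ℓ)) := by
  have ht : (q:K)^ℓ * s ≠ 0 := mul_ne_zero (pow_ne_zero _ hq) hs
  have r1 := qFib_rec q x s hq hs n
  have r2 := qFib_rec q x (q^ℓ*s) hq ht (n-ℓ)
  rw [show n+2-(ℓ:ℤ) = n-ℓ+2 by ring, show n+1-(ℓ:ℤ) = n-ℓ+1 by ring, r1, r2]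
  have hqe : q ^ (n - (ℓ:ℤ)) * (q^ℓ * s) = q^n * s := by
    rw [← zpow_natCast q ℓ, ← mul_assoc, ← zpow_add₀ hq, show n-(ℓ:ℤ)+ℓ = n by ring]
  rw [hqe]
  ring

lemma qFib_R_step (q x s : K) (hq : q ≠ 0) (hs : s ≠ 0) (ℓ : ℕ) (n : ℤ) :
    (-s) ^ (n+1-(ℓ:ℤ)) * q ^ ((n+1)*n/2 - (ℓ:ℤ)*((ℓ:ℤ)-1)/2)
    = -q^n * s * ((-s) ^ (n-(ℓ:ℤ)) * q ^ (n*(n-1)/2 - (ℓ:ℤ)*((ℓ:ℤ)-1)/2)) := by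
  have hns : -s ≠ 0 := neg_ne_zero.mpr hs
  rw [show n+1-(ℓ:ℤ) = (n-(ℓ:ℤ))+1 by ring, zpow_add_one₀ hns,
      show (n+1)*n/2 - (ℓ:ℤ)*((ℓ:ℤ)-1)/2 = (n*(n-1)/2 - (ℓ:ℤ)*((ℓ:ℤ)-1)/2) + n by
        have := tri_step n; omega,
      zpow_add₀ hq]
  ring

lemma qFib_cassini_one (q x s : K) (hq : q ≠ 0) (hs : s ≠ 0) (ℓ : ℕ) (n : ℤ) :
    qFib q x s n * qFib q x (q^ℓ*s) (n+1-ℓ) - qFib q x s (n+1) * qFib q x (q^ℓ*s) (n-ℓ)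
    = (-s) ^ (n-(ℓ:ℤ)) * q ^ (n*(n-1)/2 - (ℓ:ℤ)*((ℓ:ℤ)-1)/2) * qFib q x s (ℓ:ℤ) := by
  have key : ∀ k : ℤ,
      qFib q x s ((ℓ:ℤ)+k) * qFib q x (q^ℓ*s) ((ℓ:ℤ)+k+1-ℓ)
        - qFib q x s ((ℓ:ℤ)+k+1) * qFib q x (q^ℓ*s) ((ℓ:ℤ)+k-ℓ)
      = (-s) ^ ((ℓ:ℤ)+k-(ℓ:ℤ)) * q ^ (((ℓ:ℤ)+k)*(((ℓ:ℤ)+k)-1)/2 - (ℓ:ℤ)*((ℓ:ℤ)-1)/2)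
          * qFib q x s (ℓ:ℤ) := by
    intro k
    induction k using Int.induction_on with
    | zero =>
      rw [show (ℓ:ℤ)+0+1-(ℓ:ℤ) = 1 by ring, show (ℓ:ℤ)+0-(ℓ:ℤ) = 0 by ring,
          show (ℓ:ℤ)+0 = (ℓ:ℤ) by ring, qFib_one', qFib_zero']
      simp
    | succ i ih =>
      have hstep := qFib_D_step q x s hq hs ℓ ((ℓ:ℤ)+(i:ℤ))
      have hR := qFib_R_step q x s hq hs ℓ ((ℓ:ℤ)+(i:ℤ))
      rw [show (ℓ:ℤ)+((i:ℤ)+1) = ((ℓ:ℤ)+(i:ℤ))+1 by ring,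
          show ((ℓ:ℤ)+(i:ℤ))+1+1 = ((ℓ:ℤ)+(i:ℤ))+2 by ring,
          hstep, ih,
          show (((ℓ:ℤ)+(i:ℤ))+1)*((((ℓ:ℤ)+(i:ℤ))+1)-1) = (((ℓ:ℤ)+(i:ℤ))+1)*((ℓ:ℤ)+(i:ℤ)) by ring,
          hR]
      ring
    | pred i ih =>
      have hc : (-(q^((ℓ:ℤ)+(-(i:ℤ)-1)) * s)) ≠ 0 :=
        neg_ne_zero.mpr (mul_ne_zero (zpow_ne_zero _ hq) hs)
      have hc' : (-q^((ℓ:ℤ)+(-(i:ℤ)-1)) * s) ≠ 0 := by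
        rw [neg_mul]; exact hc
      have hstep := qFib_D_step q x s hq hs ℓ ((ℓ:ℤ)+(-(i:ℤ)-1))
      have hR := qFib_R_step q x s hq hs ℓ ((ℓ:ℤ)+(-(i:ℤ)-1))
      apply mul_left_cancel₀ hc'
      rw [← hstep,
          show ((ℓ:ℤ)+(-(i:ℤ)-1))+2-(ℓ:ℤ) = ((ℓ:ℤ)+(-(i:ℤ)))+1-(ℓ:ℤ) by ring,
          show ((ℓ:ℤ)+(-(i:ℤ)-1))+2 = ((ℓ:ℤ)+(-(i:ℤ)))+1 by ring,
          show ((ℓ:ℤ)+(-(i:ℤ)-1))+1-(ℓ:ℤ) = ((ℓ:ℤ)+(-(i:ℤ)))-(ℓ:ℤ) by ring,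
          show ((ℓ:ℤ)+(-(i:ℤ)-1))+1 = ((ℓ:ℤ)+(-(i:ℤ))) by ring,
          ih, ← mul_assoc, ← hR,
          show ((ℓ:ℤ)+(-(i:ℤ)))*(((ℓ:ℤ)+(-(i:ℤ)))-1) = (((ℓ:ℤ)+(-(i:ℤ)-1))+1)*((ℓ:ℤ)+(-(i:ℤ)-1)) by ring,
          show (ℓ:ℤ)+(-(i:ℤ))-(ℓ:ℤ) = ((ℓ:ℤ)+(-(i:ℤ)-1))+1-(ℓ:ℤ) by ring]
  have h := key (n - ℓ)
  rw [show (ℓ:ℤ)+(n-(ℓ:ℤ)) = n by ring] at h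
  convert h using 3 <;> ring

lemma qFib_cassini_aux (q x s : K) (hq : q ≠ 0) (hs : s ≠ 0) (n : ℤ) (ℓ : ℕ) (m : ℕ) :
    qFib q x s n * qFib q x (q^ℓ*s) (n+(m:ℤ)-ℓ) - qFib q x s (n+(m:ℤ)) * qFib q x (q^ℓ*s) (n-ℓ)
    = ((-s) ^ (n-(ℓ:ℤ)) * q ^ (n*(n-1)/2 - (ℓ:ℤ)*((ℓ:ℤ)-1)/2) * qFib q x s (ℓ:ℤ))
        * qFib q x (q^n*s) (m:ℤ) := by
  have ht : (q:K)^n * s ≠ 0 := mul_ne_zero (zpow_ne_zero _ hq) hs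
  induction m using Nat.twoStepInduction with
  | zero =>
    rw [show ((0:ℕ):ℤ) = 0 from rfl, qFib_zero', add_zero]
    ring
  | one =>
    rw [show ((1:ℕ):ℤ) = 1 from rfl, qFib_one', mul_one]
    exact qFib_cassini_one q x s hq hs ℓ n
  | more m ih0 ih1 =>
    have r1 := qFib_rec q x s hq hs (n+(m:ℤ))
    have r2 := qFib_rec q x (q^ℓ*s) hq (mul_ne_zero (pow_ne_zero _ hq) hs) (n+(m:ℤ)-ℓ)
    have r3 := qFib_rec q x (q^n*s) hq ht (m:ℤ)
    rw [show ((m+2:ℕ):ℤ) = (m:ℤ)+2 by push_cast; ring] at *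
    rw [show ((m+1:ℕ):ℤ) = (m:ℤ)+1 by push_cast; ring] at *
    rw [show n+((m:ℤ)+2)-(ℓ:ℤ) = (n+(m:ℤ)-ℓ)+2 by ring,
        show n+((m:ℤ)+2) = (n+(m:ℤ))+2 by ring, r1, r2, r3,
        show (n+(m:ℤ)-ℓ)+1 = n+((m:ℤ)+1)-ℓ by ring,
        show (n+(m:ℤ))+1 = n+((m:ℤ)+1) by ring]
    have e1 : q ^ (n+(m:ℤ)-(ℓ:ℤ)) * (q^ℓ*s) = q^(n+(m:ℤ)) * s := by
      rw [← zpow_natCast q ℓ, ← mul_assoc, ← zpow_add₀ hq,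
          show n+(m:ℤ)-(ℓ:ℤ)+(ℓ:ℤ) = n+(m:ℤ) by ring]
    have e2 : q ^ (m:ℤ) * (q^n*s) = q^(n+(m:ℤ)) * s := by
      rw [← mul_assoc, ← zpow_add₀ hq, show (m:ℤ)+n = n+(m:ℤ) by ring]
    rw [e1, e2]
    linear_combination x * ih1 + q^(n+(m:ℤ))*s * ih0

theorem qFib_cassini_euler (q x s : K) (hq : q ≠ 0) (hs : s ≠ 0) (n : ℤ) (m ℓ : ℕ) :
    Matrix.det !![qFib q x s n, qFib q x (q ^ ℓ * s) (n - ℓ);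
                  qFib q x s (n + m), qFib q x (q ^ ℓ * s) (n + m - ℓ)] =
      (-s) ^ (n - ℓ) * q ^ (n * (n - 1) / 2 - (ℓ : ℤ) * ((ℓ : ℤ) - 1) / 2) *
        qFib q x s (ℓ : ℤ) * qFib q x (q ^ n * s) (m : ℤ) := by
  rw [Matrix.det_fin_two_of]
  rw [mul_comm (qFib q x (q ^ ℓ * s) (n - (ℓ:ℤ)))]
  exact qFib_cassini_aux q x s hq hs n ℓ m
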